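/- Let f : {0,1}^n → {0,1} be a non-constant symmetric function and let t_f be the minimum value such that f is constant on inputs with Hamming weight in [t_f, n - t_f]. Then the spectral norm of the adjacency matrix of the sensitivity graph of f is at least sqrt(t_f · (n + 1 - t_f)). -/

import Mathlib

open Finset

/-- Hamming weight of a Boolean string. -/
def wt {n : ℕ} (x : Fin n → Bool) : ℕ := (univ.filter (fun i => x i = true)).card

/-- The threshold function with threshold `k` on `n` bits. -/
def Tk (n k : ℕ) (x : Fin n → Bool) : Bool := decide (k ≤ wt x)

/-- Flip the `i`-th bit of `x`. -/
def flipBit {n : ℕ} (x : Fin n → Bool) (i : Fin n) : Fin n → Bool := Function.update x i (!x i)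

/-- Sensitivity of `f` at input `x`. -/
def sens {n : ℕ} (f : (Fin n → Bool) → Bool) (x : Fin n → Bool) : ℕ :=
  (univ.filter (fun i => f (flipBit x i) ≠ f x)).card

/-- Adjacency matrix of the sensitivity graph of `f`. -/
def adjMat {n : ℕ} (f : (Fin n → Bool) → Bool) : Matrix (Fin n → Bool) (Fin n → Bool) ℝ :=
  fun x y => if hammingDist x y = 1 ∧ f x ≠ f y then 1 else 0

/-- Euclidean norm of a real vector indexed by a finite type. -/
noncomputable def enorm {ι : Type*} [Fintype ι] (v : ι → ℝ) : ℝ :=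
  Real.sqrt (∑ i, v i ^ 2)

/-- Spectral norm of a real matrix, as the maximal stretch of a nonzero vector. -/
noncomputable def specNorm {ι : Type*} [Fintype ι] [DecidableEq ι] (A : Matrix ι ι ℝ) : ℝ :=
  sSup {r : ℝ | ∃ v : ι → ℝ, v ≠ 0 ∧ r = _root_.enorm (A.mulVec v) / _root_.enorm v}

-- Auxiliary lemmas

lemma wt_le {n : ℕ} (x : Fin n → Bool) : wt x ≤ n := by
  simpa [wt] using (Finset.card_filter_le univ (fun i => x i = true))

lemma exists_wt {n m : ℕ} (h : m ≤ n) : ∃ x : Fin n → Bool, wt x = m := by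
  refine ⟨fun i => decide ((i : ℕ) < m), ?_⟩
  unfold wt
  have : (univ.filter (fun i : Fin n => decide ((i : ℕ) < m) = true)).image Fin.val
      = Finset.range m := by
    ext a
    simp only [Finset.mem_image, Finset.mem_filter, Finset.mem_univ, true_and,
      decide_eq_true_eq, Finset.mem_range]
    constructor
    · rintro ⟨i, hi, rfl⟩; exact hi
    · intro ha; exact ⟨⟨a, lt_of_lt_of_le ha h⟩, ha, rfl⟩
  have hinj := Finset.card_image_of_injective
    (univ.filter (fun i : Fin n => decide ((i : ℕ) < m) = true)) (Fin.val_injective)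
  rw [this] at hinj
  simpa using hinj.symm

lemma hammingDist_flipBit {n : ℕ} (x : Fin n → Bool) (i : Fin n) :
    hammingDist x (flipBit x i) = 1 := by
  have : (univ.filter (fun j => x j ≠ flipBit x i j)) = {i} := by
    ext j
    simp only [Finset.mem_filter, Finset.mem_univ, true_and, Finset.mem_singleton, flipBit]
    by_cases hj : j = i
    · subst hj; erw [Finset.mem_filter]; simp [Function.update_self]
    · erw [Finset.mem_filter]; simp [Function.update_of_ne hj, hj]
  simp [hammingDist, this]

lemma flipBit_injective {n : ℕ} (x : Fin n → Bool) : Function.Injective (flipBit x) := by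
  intro i j hij
  by_contra hne
  have h1 : flipBit x i i = !x i := Function.update_self _ _ _
  have h2 : flipBit x j i = x i := Function.update_of_ne hne _ _
  rw [hij, h2] at h1
  cases x i <;> simp_all

lemma wt_flipBit_false {n : ℕ} {x : Fin n → Bool} {i : Fin n} (hx : x i = false) :
    wt (flipBit x i) = wt x + 1 := by
  have : (univ.filter (fun j => flipBit x i j = true))
      = insert i (univ.filter (fun j => x j = true)) := by
    ext j
    simp only [Finset.mem_filter, Finset.mem_univ, true_and, Finset.mem_insert, flipBit]
    by_cases hj : j = i
    · subst hj; simp [Function.update_self, hx]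
    · erw [Finset.mem_filter]; simp [Function.update_of_ne hj, hj]
  rw [wt, this, Finset.card_insert_of_notMem (by simp [hx]), wt]

lemma wt_flipBit_true {n : ℕ} {x : Fin n → Bool} {i : Fin n} (hx : x i = true) :
    wt (flipBit x i) + 1 = wt x := by
  have h : (univ.filter (fun j => flipBit x i j = true))
      = (univ.filter (fun j => x j = true)).erase i := by
    ext j
    simp only [Finset.mem_filter, Finset.mem_univ, true_and, Finset.mem_erase, flipBit]
    by_cases hj : j = i
    · subst hj; simp [Function.update_self, hx]
    · erw [Finset.mem_filter]; simp [Function.update_of_ne hj, hj]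
  rw [wt, h, Finset.card_erase_of_mem (by simp [hx]), wt]
  have hm : i ∈ univ.filter (fun j => x j = true) := by simp [hx]
  have := Finset.card_pos.2 ⟨i, hm⟩
  omega

lemma card_false {n : ℕ} (x : Fin n → Bool) :
    (univ.filter (fun i => x i = false)).card = n - wt x := by
  have h := Finset.card_filter_add_card_filter_not
    (s := (univ : Finset (Fin n))) (p := fun i => x i = true)
  simp only [Finset.card_univ, Fintype.card_fin] at h
  have he : (univ.filter (fun i => ¬ x i = true)) = (univ.filter (fun i => x i = false)) := by
    ext j; simp
  rw [he] at h
  unfold wt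
  omega

lemma exists_jump (g : ℕ → Bool) {a b : ℕ} (hab : a < b) (hg : g a ≠ g b) :
    ∃ j, a ≤ j ∧ j < b ∧ g j ≠ g (j + 1) := by
  by_contra hc
  push_neg at hc
  have key : ∀ d, a + d ≤ b → g a = g (a + d) := by
    intro d
    induction d with
    | zero => intro _; rfl
    | succ d ih =>
      intro hd
      have h1 : a + d ≤ b := by omega
      have := hc (a + d) (by omega) (by omega)
      rw [ih h1, ← Nat.add_assoc]
      exact this
  have := key (b - a) (by omega)
  rw [Nat.add_sub_cancel' hab.le] at this
  exact hg this

lemma find_k (g : ℕ → Bool) (n t : ℕ) (ht1 : 1 ≤ t) (a b : ℕ)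
    (ha1 : t - 1 ≤ a) (ha2 : a ≤ n - (t - 1)) (hb1 : t - 1 ≤ b) (hb2 : b ≤ n - (t - 1))
    (hab : g a ≠ g b) :
    ∃ k, 1 ≤ k ∧ k ≤ n ∧ g (k - 1) ≠ g k ∧ t ≤ k ∧ k + t ≤ n + 1 := by
  have hlt : t - 1 ≤ n := le_trans ha1 (le_trans ha2 (Nat.sub_le _ _))
  have ha2' : a + (t - 1) ≤ n := by omega
  have hb2' : b + (t - 1) ≤ n := by omega
  rcases lt_trichotomy a b with h | h | h
  · obtain ⟨j, hj1, hj2, hjg⟩ := exists_jump g h hab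
    exact ⟨j + 1, by omega, by omega, by simpa using hjg, by omega, by omega⟩
  · exact absurd (h ▸ rfl) hab
  · obtain ⟨j, hj1, hj2, hjg⟩ := exists_jump g h hab.symm
    exact ⟨j + 1, by omega, by omega, by simpa using hjg, by omega, by omega⟩

lemma adjMat_nonneg {n : ℕ} (f : (Fin n → Bool) → Bool) (x y : Fin n → Bool) :
    0 ≤ adjMat f x y := by
  unfold adjMat; split_ifs <;> norm_num

lemma mulVec_lower {n : ℕ} (f : (Fin n → Bool) → Bool) (v : (Fin n → Bool) → ℝ)
    (hv : ∀ y, 0 ≤ v y) (x : Fin n → Bool) (I : Finset (Fin n)) (c : ℝ)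
    (hI : ∀ i ∈ I, (adjMat f) x (flipBit x i) * v (flipBit x i) = c) :
    (I.card : ℝ) * c ≤ (adjMat f).mulVec v x := by
  have h1 : ∑ y ∈ I.image (flipBit x), adjMat f x y * v y ≤ ∑ y, adjMat f x y * v y :=
    Finset.sum_le_sum_of_subset_of_nonneg (Finset.subset_univ _)
      (fun y _ _ => mul_nonneg (adjMat_nonneg f x y) (hv _))
  rw [Finset.sum_image (fun i _ j _ h => flipBit_injective x h)] at h1
  rw [Finset.sum_congr rfl hI, Finset.sum_const, nsmul_eq_mul] at h1
  have h2 : (adjMat f).mulVec v x = ∑ y, adjMat f x y * v y := by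
    simp [Matrix.mulVec, dotProduct]
  rw [h2]
  exact h1

lemma adjMat_flip_eq_one {n : ℕ} (f : (Fin n → Bool) → Bool) (x : Fin n → Bool) (i : Fin n)
    (hfx : f x ≠ f (flipBit x i)) : adjMat f x (flipBit x i) = 1 := by
  unfold adjMat
  rw [if_pos ⟨hammingDist_flipBit x i, hfx⟩]

theorem specNorm_symm_lower (n : ℕ) (g : ℕ → Bool) (f : (Fin n → Bool) → Bool)
    (hf : ∀ x, f x = g (wt x)) (hnc : ∃ x y : Fin n → Bool, f x ≠ f y) (t : ℕ)
    (ht : IsLeast {s : ℕ | ∀ a b : ℕ, s ≤ a → a ≤ n - s → s ≤ b → b ≤ n - s → g a = g b} t) :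
    Real.sqrt ((t : ℝ) * ((n : ℝ) + 1 - t)) ≤ specNorm (adjMat f) := by
  classical
  obtain ⟨x0, y0, hxy⟩ := hnc
  -- t ≥ 1
  have ht1 : 1 ≤ t := by
    rcases Nat.eq_zero_or_pos t with h | h
    · exfalso
      apply hxy
      rw [hf, hf]
      have := ht.1
      rw [h] at this
      exact this _ _ (Nat.zero_le _) (by simpa using wt_le x0) (Nat.zero_le _)
        (by simpa using wt_le y0)
    · exact h
  -- ¬ P (t - 1)
  have hPt1 : ¬ ((t - 1) ∈ {s : ℕ | ∀ a b : ℕ, s ≤ a → a ≤ n - s → s ≤ b → b ≤ n - s →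
      g a = g b}) := by
    intro h
    have := ht.2 h
    omega
  simp only [Set.mem_setOf_eq] at hPt1
  push_neg at hPt1
  obtain ⟨a, b, ha1, ha2, hb1, hb2, hab⟩ := hPt1
  obtain ⟨k, hk1, hkn, hgk, htk, hktn⟩ := find_k g n t ht1 a b ha1 ha2 hb1 hb2 hab
  -- real facts
  have hkr : (1 : ℝ) ≤ (k : ℝ) := by exact_mod_cast hk1
  have hknr : (k : ℝ) ≤ (n : ℝ) := by exact_mod_cast hkn
  have hnk_pos : (0 : ℝ) < (n : ℝ) + 1 - k := by linarith
  have hk_pos : (0 : ℝ) < (k : ℝ) := by linarith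
  set α : ℝ := Real.sqrt ((n : ℝ) + 1 - k) with hα
  set β : ℝ := Real.sqrt (k : ℝ) with hβ
  have hα_pos : 0 < α := Real.sqrt_pos.2 hnk_pos
  have hβ_pos : 0 < β := Real.sqrt_pos.2 hk_pos
  have hα_sq : α ^ 2 = (n : ℝ) + 1 - k := Real.sq_sqrt hnk_pos.le
  have hβ_sq : β ^ 2 = (k : ℝ) := Real.sq_sqrt hk_pos.le
  set v : (Fin n → Bool) → ℝ :=
    fun x => if wt x = k - 1 then α else if wt x = k then β else 0 with hv
  have hv_nonneg : ∀ x, 0 ≤ v x := by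
    intro x
    simp only [hv]
    split_ifs
    exacts [hα_pos.le, hβ_pos.le, le_refl 0]
  set A := adjMat f with hA
  -- cast of n - (k-1)
  have hcast : ((n - (k - 1) : ℕ) : ℝ) = (n : ℝ) + 1 - k := by
    have h1 : k - 1 ≤ n := by omega
    rw [Nat.cast_sub h1, Nat.cast_sub hk1]
    push_cast
    ring
  -- lower bound on layer k-1
  have hC1 : ∀ x : Fin n → Bool, wt x = k - 1 →
      ((n : ℝ) + 1 - k) * β ≤ A.mulVec v x := by
    intro x hwt
    have hcard : ((univ.filter (fun i => x i = false)).card : ℝ) = (n : ℝ) + 1 - k := by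
      rw [card_false, hwt]
      rw [show n - (k - 1) = n - (k - 1) from rfl] at hcast
      exact hcast
    have := mulVec_lower f v hv_nonneg x (univ.filter (fun i => x i = false)) β ?_
    · rw [hcard] at this; exact this
    · intro i hi
      simp only [Finset.mem_filter, Finset.mem_univ, true_and] at hi
      have hwf : wt (flipBit x i) = k := by
        rw [wt_flipBit_false hi, hwt]; omega
      have hne : f x ≠ f (flipBit x i) := by
        rw [hf, hf, hwt, hwf]; exact hgk
      rw [adjMat_flip_eq_one f x i hne, one_mul]
      simp [hv, hwf]
      intro h
      exact absurd h (by omega)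
  -- lower bound on layer k
  have hC2 : ∀ x : Fin n → Bool, wt x = k →
      (k : ℝ) * α ≤ A.mulVec v x := by
    intro x hwt
    have hcard : ((univ.filter (fun i => x i = true)).card : ℝ) = (k : ℝ) := by
      rw [show (univ.filter (fun i => x i = true)).card = wt x from rfl, hwt]
    have := mulVec_lower f v hv_nonneg x (univ.filter (fun i => x i = true)) α ?_
    · rw [hcard] at this; exact this
    · intro i hi
      simp only [Finset.mem_filter, Finset.mem_univ, true_and] at hi
      have hwf : wt (flipBit x i) = k - 1 := by
        have := wt_flipBit_true hi
        omega
      have hne : f x ≠ f (flipBit x i) := by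
        rw [hf, hf, hwt, hwf]; exact hgk.symm
      rw [adjMat_flip_eq_one f x i hne, one_mul]
      simp [hv, hwf]
  -- pointwise squared bound
  have hpt : ∀ x : Fin n → Bool,
      (k : ℝ) * ((n : ℝ) + 1 - k) * v x ^ 2 ≤ (A.mulVec v x) ^ 2 := by
    intro x
    by_cases h1 : wt x = k - 1
    · have hc := hC1 x h1
      have h0 : (0 : ℝ) ≤ ((n : ℝ) + 1 - k) * β := by positivity
      have hsq := pow_le_pow_left₀ h0 hc 2
      have hvx : v x = α := by simp [hv, h1]
      rw [hvx]
      calc (k : ℝ) * ((n : ℝ) + 1 - k) * α ^ 2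
          = (((n : ℝ) + 1 - k) * β) ^ 2 := by rw [hα_sq, mul_pow, hβ_sq]; ring
        _ ≤ (A.mulVec v x) ^ 2 := hsq
    · by_cases h2 : wt x = k
      · have hc := hC2 x h2
        have h0 : (0 : ℝ) ≤ (k : ℝ) * α := by positivity
        have hsq := pow_le_pow_left₀ h0 hc 2
        have hvx : v x = β := by
          simp [hv, h2]
          intro h
          exact absurd h (by omega)
        rw [hvx]
        calc (k : ℝ) * ((n : ℝ) + 1 - k) * β ^ 2
            = ((k : ℝ) * α) ^ 2 := by rw [hβ_sq, mul_pow, hα_sq]; ring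
          _ ≤ (A.mulVec v x) ^ 2 := hsq
      · have hvx : v x = 0 := by simp [hv, h1, h2]
        rw [hvx]
        simpa using sq_nonneg (A.mulVec v x)
  have hsum : (k : ℝ) * ((n : ℝ) + 1 - k) * ∑ x, v x ^ 2 ≤ ∑ x, (A.mulVec v x) ^ 2 := by
    rw [Finset.mul_sum]
    exact Finset.sum_le_sum (fun x _ => hpt x)
  -- v ≠ 0 and _root_.enorm v > 0
  obtain ⟨z, hz⟩ := exists_wt (show k - 1 ≤ n by omega)
  have hvz : v z = α := by simp [hv, hz]
  have hvne : v ≠ 0 := by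
    intro h
    have := congrFun h z
    rw [hvz] at this
    exact hα_pos.ne' this
  have hsum_pos : 0 < ∑ x, v x ^ 2 := by
    have h1 : v z ^ 2 ≤ ∑ x, v x ^ 2 :=
      Finset.single_le_sum (fun x _ => sq_nonneg (v x)) (Finset.mem_univ z)
    have h2 : 0 < v z ^ 2 := by rw [hvz]; positivity
    linarith
  have henorm_pos : 0 < _root_.enorm v := Real.sqrt_pos.2 hsum_pos
  -- the ratio bound
  have hr0 : Real.sqrt ((k : ℝ) * ((n : ℝ) + 1 - k)) ≤ _root_.enorm (A.mulVec v) / _root_.enorm v := by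
    rw [le_div_iff₀ henorm_pos]
    have h1 : Real.sqrt ((k : ℝ) * ((n : ℝ) + 1 - k)) * _root_.enorm v
        = Real.sqrt ((k : ℝ) * ((n : ℝ) + 1 - k) * ∑ x, v x ^ 2) := by
      rw [_root_.enorm, ← Real.sqrt_mul (by positivity)]
    rw [h1, _root_.enorm]
    exact Real.sqrt_le_sqrt hsum
  -- bounded above
  have hbdd : BddAbove {r : ℝ | ∃ w : (Fin n → Bool) → ℝ, w ≠ 0 ∧
      r = _root_.enorm (A.mulVec w) / _root_.enorm w} := by
    refine ⟨(Fintype.card (Fin n → Bool) : ℝ), ?_⟩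
    rintro r ⟨w, hw0, rfl⟩
    set N : ℝ := (Fintype.card (Fin n → Bool) : ℝ) with hN
    have hN_nonneg : 0 ≤ N := Nat.cast_nonneg _
    have hwpos : 0 < _root_.enorm w := by
      obtain ⟨x1, hx1⟩ := Function.ne_iff.1 hw0
      have h2 : 0 < w x1 ^ 2 :=
        lt_of_le_of_ne (sq_nonneg _) (Ne.symm (pow_ne_zero 2 hx1))
      have h1 : w x1 ^ 2 ≤ ∑ x, w x ^ 2 :=
        Finset.single_le_sum (fun x _ => sq_nonneg (w x)) (Finset.mem_univ x1)
      exact Real.sqrt_pos.2 (by linarith)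
    rw [div_le_iff₀ hwpos]
    have hCS : ∀ x : Fin n → Bool, (A.mulVec w x) ^ 2 ≤ N * ∑ y, w y ^ 2 := by
      intro x
      have h1 : A.mulVec w x = ∑ y, A x y * w y := by
        simp [Matrix.mulVec, dotProduct]
      rw [h1]
      calc (∑ y, A x y * w y) ^ 2
          ≤ (∑ y, (A x y) ^ 2) * ∑ y, w y ^ 2 :=
            Finset.sum_mul_sq_le_sq_mul_sq _ _ _
        _ ≤ N * ∑ y, w y ^ 2 := by
            apply mul_le_mul_of_nonneg_right _ (Finset.sum_nonneg (fun y _ => sq_nonneg _))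
            calc (∑ y, (A x y) ^ 2) ≤ ∑ y : Fin n → Bool, (1 : ℝ) := by
                  apply Finset.sum_le_sum
                  intro y _
                  have : A x y = 0 ∨ A x y = 1 := by
                    rw [hA]; unfold adjMat; split_ifs
                    · right; rfl
                    · left; rfl
                  rcases this with h | h <;> rw [h] <;> norm_num
              _ = N := by simp [hN]
    have h2 : _root_.enorm (A.mulVec w) ≤ N * _root_.enorm w := by
      rw [_root_.enorm, _root_.enorm]
      calc Real.sqrt (∑ x, (A.mulVec w x) ^ 2)
          ≤ Real.sqrt (∑ _x : Fin n → Bool, N * ∑ y, w y ^ 2) :=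
            Real.sqrt_le_sqrt (Finset.sum_le_sum (fun x _ => hCS x))
        _ = Real.sqrt ((N * N) * ∑ y, w y ^ 2) := by
            congr 1
            rw [Finset.sum_const, nsmul_eq_mul, Finset.card_univ, hN]
            ring
        _ = N * Real.sqrt (∑ y, w y ^ 2) := by
            rw [Real.sqrt_mul (by positivity), Real.sqrt_mul_self hN_nonneg]
    exact h2
  -- conclude
  have hmem : _root_.enorm (A.mulVec v) / _root_.enorm v ∈ {r : ℝ | ∃ w : (Fin n → Bool) → ℝ, w ≠ 0 ∧
      r = _root_.enorm (A.mulVec w) / _root_.enorm w} := ⟨v, hvne, rfl⟩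
  have hfin : Real.sqrt ((t : ℝ) * ((n : ℝ) + 1 - t)) ≤
      Real.sqrt ((k : ℝ) * ((n : ℝ) + 1 - k)) := by
    apply Real.sqrt_le_sqrt
    have h1 : (t : ℝ) ≤ (k : ℝ) := by exact_mod_cast htk
    have h2 : (k : ℝ) ≤ (n : ℝ) + 1 - t := by
      have : (k : ℝ) + t ≤ (n : ℝ) + 1 := by exact_mod_cast hktn
      linarith
    nlinarith [mul_nonneg (sub_nonneg.2 h1) (sub_nonneg.2 h2)]
  calc Real.sqrt ((t : ℝ) * ((n : ℝ) + 1 - t))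
      ≤ Real.sqrt ((k : ℝ) * ((n : ℝ) + 1 - k)) := hfin
    _ ≤ _root_.enorm (A.mulVec v) / _root_.enorm v := hr0
    _ ≤ specNorm A := le_csSup hbdd hmem
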